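/- Let H be a complex Hilbert space and K ⊆ H a real subspace. Then K + iK is dense in H if and only if K′ ∩ iK′ = {0}, where K′ is the symplectic complement of K. -/

import Mathlib

open scoped Pointwise

/-- The symplectic complement `K′ = {ψ ∈ H : Im⟪ψ, k⟫ = 0 for all k ∈ K}` of a real
subspace `K` of a complex Hilbert space (inner ℂ product conjugate-linear in the first
argument). -/
def symplCompl {H : Type*} [NormedAddCommGroup H] [InnerProductSpace ℂ H]
    (K : Set H) : Set H :=
  {ψ : H | ∀ k ∈ K, (inner ℂ ψ k : ℂ).im = 0}

/-- For a real subspace `K ⊆ H` of a complex Hilbert space,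
`K + iK` is dense in `H` if and only if `K′ ∩ iK′ = {0}`. -/
theorem dense_sum_iff_symplCompl_inter_trivial
    {H : Type*} [NormedAddCommGroup H] [InnerProductSpace ℂ H] [CompleteSpace H]
    (K : Set H)
    (h0 : (0 : H) ∈ K)
    (hadd : ∀ x ∈ K, ∀ y ∈ K, x + y ∈ K)
    (hsmul : ∀ (r : ℝ), ∀ x ∈ K, r • x ∈ K) :
    Dense (K + Complex.I • K : Set H) ↔
      symplCompl K ∩ (Complex.I • symplCompl K) = {0} := by
  classical
  -- `K + I • K` is a complex submodule of `H`.
  let S : Submodule ℂ H :=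
    { carrier := (K + Complex.I • K : Set H)
      add_mem' := by
        rintro x y ⟨a, ha, -, ⟨b, hb, rfl⟩, rfl⟩ ⟨c, hc, -, ⟨d, hd, rfl⟩, rfl⟩
        refine ⟨a + c, hadd _ ha _ hc, Complex.I • (b + d), ⟨b + d, hadd _ hb _ hd, rfl⟩, ?_⟩
        rw [smul_add]; beta_reduce; abel
      zero_mem' := ⟨0, h0, 0, ⟨0, h0, smul_zero _⟩, add_zero 0⟩
      smul_mem' := by
        rintro c x ⟨a, ha, -, ⟨b, hb, rfl⟩, rfl⟩
        refine ⟨c.re • a + (-c.im) • b, hadd _ (hsmul _ _ ha) _ (hsmul _ _ hb),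
          Complex.I • (c.im • a + c.re • b),
          ⟨c.im • a + c.re • b, hadd _ (hsmul _ _ ha) _ (hsmul _ _ hb), rfl⟩, ?_⟩
        match_scalars <;> simp [Complex.ext_iff] }
  -- Density is equivalent to triviality of the orthogonal complement.
  have hdense : Dense (K + Complex.I • K : Set H) ↔ Sᗮ = ⊥ := by
    rw [← Submodule.topologicalClosure_eq_top_iff,
      ← Submodule.dense_iff_topologicalClosure_eq_top]
    exact Iff.rfl
  -- Membership in `Sᗮ` is inner-orthogonality to `K`.
  have hmemS : ∀ k ∈ K, k ∈ S := fun k hk =>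
    ⟨k, hk, 0, ⟨0, h0, smul_zero _⟩, add_zero k⟩
  have horth : ∀ ψ : H, ψ ∈ Sᗮ ↔ ∀ k ∈ K, (inner ℂ ψ k : ℂ) = 0 := by
    intro ψ
    rw [Submodule.mem_orthogonal]
    constructor
    · intro h k hk
      rw [inner_eq_zero_symm]
      exact h k (hmemS k hk)
    · rintro h u ⟨a, ha, -, ⟨b, hb, rfl⟩, rfl⟩
      have ha' : (inner ℂ a ψ : ℂ) = 0 := by rw [inner_eq_zero_symm]; exact h a ha
      have hb' : (inner ℂ b ψ : ℂ) = 0 := by rw [inner_eq_zero_symm]; exact h b hb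
      rw [inner_add_left, inner_smul_left, ha', hb']
      simp
  -- Membership in `K′ ∩ iK′` is inner-orthogonality to `K`.
  have hchar : ∀ ψ : H, ψ ∈ symplCompl K ∩ (Complex.I • symplCompl K) ↔
      ∀ k ∈ K, (inner ℂ ψ k : ℂ) = 0 := by
    intro ψ
    constructor
    · rintro ⟨h1, φ, hφ, rfl⟩ k hk
      have hre : (inner ℂ (Complex.I • φ) k : ℂ) = -Complex.I * inner ℂ φ k := by
        rw [inner_smul_left, Complex.conj_I]
      apply Complex.ext
      · have := hφ k hk
        rw [hre]
        simpa using this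
      · exact h1 k hk
    · intro h
      refine ⟨fun k hk => by rw [h k hk]; simp, (-Complex.I) • ψ, fun k hk => ?_, ?_⟩
      · rw [inner_smul_left]
        simp [h k hk]
      · show Complex.I • (-Complex.I) • ψ = ψ
        rw [smul_smul]
        simp
  -- Put everything together.
  rw [hdense, Submodule.eq_bot_iff, Set.eq_singleton_iff_unique_mem]
  constructor
  · intro h
    refine ⟨(hchar 0).2 fun k _ => inner_zero_left k, fun ψ hψ => h ψ ?_⟩
    exact (horth ψ).2 ((hchar ψ).1 hψ)
  · intro h ψ hψ
    exact h.2 ψ ((hchar ψ).2 ((horth ψ).1 hψ))
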